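/- arXiv:1310.1042 — 3 statements merged into one kernel-verified Lean document; each statement's English description precedes it below -/
import Mathlib

section
/- Let G be a bridgeless cubic graph and H a subgraph of G whose resistance is k (i.e., at least k edges must be removed from H to make it properly 3-edge-colourable). Then any cycle of G that is not entirely contained in H misses at least k vertices of H. -/
open SimpleGraph

/-- Two edges (as unordered pairs) share a vertex. -/
def EdgesShare {V : Type*} (e₁ e₂ : Sym2 V) : Prop := ∃ v, v ∈ e₁ ∧ v ∈ e₂

/-- A proper 3-edge-colouring of a simple graph: distinct incident edges get distinct colours. -/
def IsProper3EdgeColoring {V : Type*} (G : SimpleGraph V) (c : Sym2 V → Fin 3) : Prop :=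
  ∀ e₁ ∈ G.edgeSet, ∀ e₂ ∈ G.edgeSet, e₁ ≠ e₂ → EdgesShare e₁ e₂ → c e₁ ≠ c e₂

def Is3EdgeColorable {V : Type*} (G : SimpleGraph V) : Prop :=
  ∃ c, IsProper3EdgeColoring G c

/-- The resistance of a graph: the least number of edges whose removal yields a
properly 3-edge-colourable graph. -/
noncomputable def resistance {V : Type*} (G : SimpleGraph V) : ℕ :=
  sInf {n | ∃ F : Finset (Sym2 V), ↑F ⊆ G.edgeSet ∧ F.card = n ∧
    Is3EdgeColorable (G.deleteEdges ↑F)}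


section WalkAux
variable {V : Type*} {G : SimpleGraph V}

lemma walk_support_eq_map {u v : V} (p : G.Walk u v) :
    p.support = (List.range (p.length + 1)).map p.getVert := by
  induction p with
  | nil => rfl
  | cons h q ih =>
    rw [Walk.support_cons, ih]
    conv_rhs => rw [Walk.length_cons, List.range_succ_eq_map, List.map_cons, List.map_map]
    rfl

lemma walk_edges_eq_map {u v : V} (p : G.Walk u v) :
    p.edges = (List.range p.length).map (fun i => s(p.getVert i, p.getVert (i+1))) := by
  induction p with
  | nil => rfl
  | cons h q ih =>
    rw [Walk.edges_cons, ih]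
    conv_rhs => rw [Walk.length_cons, List.range_succ_eq_map, List.map_cons, List.map_map]
    congr 1
    · rw [show (0:ℕ)+1 = 1 from rfl, Walk.getVert_zero, Walk.getVert_cons_succ, Walk.getVert_zero]

lemma getVert_mem_support {u v : V} (p : G.Walk u v) {i : ℕ} (hi : i ≤ p.length) :
    p.getVert i ∈ p.support :=
  Walk.mem_support_iff_exists_getVert.2 ⟨i, rfl, hi⟩

lemma isPath_getVert_inj {u v : V} {p : G.Walk u v} (hp : p.IsPath) :
    ∀ i, i ≤ p.length → ∀ j, j ≤ p.length → p.getVert i = p.getVert j → i = j := by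
  have hnd := hp.support_nodup
  rw [walk_support_eq_map] at hnd
  intro i hi j hj hij
  exact List.inj_on_of_nodup_map hnd (List.mem_range.2 (by omega)) (List.mem_range.2 (by omega)) hij

lemma isCycle_getVert_inj {u : V} {w : G.Walk u u} (hc : w.IsCycle) :
    ∀ i, 1 ≤ i → i ≤ w.length → ∀ j, 1 ≤ j → j ≤ w.length → w.getVert i = w.getVert j → i = j := by
  have hnd := hc.support_nodup
  rw [walk_support_eq_map, List.range_succ_eq_map, List.map_cons, List.tail_cons, List.map_map]
    at hnd
  intro i hi1 hi2 j hj1 hj2 hij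
  have : (i - 1) = (j - 1) := by
    refine List.inj_on_of_nodup_map hnd (List.mem_range.2 (by omega)) (List.mem_range.2 (by omega)) ?_
    have h1 : i - 1 + 1 = i := by omega
    have h2 : j - 1 + 1 = j := by omega
    simpa [Function.comp, Nat.succ_eq_add_one, h1, h2] using hij
  omega

/-- first step into a set along a walk -/
lemma exists_boundary {s t : V} (q : G.Walk s t) (S : Set V) (hs : s ∉ S) (ht : t ∈ S) :
    ∃ x y, G.Adj x y ∧ x ∉ S ∧ y ∈ S := by
  induction q with
  | nil => exact absurd ht hs
  | @cons a b c h q ih =>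
    by_cases hm : b ∈ S
    · exact ⟨_, _, h, hs, hm⟩
    · exact ih hm ht

end WalkAux

section CycleAux
variable {V : Type*} [DecidableEq V] {G : SimpleGraph V} {u : V} {w : G.Walk u u}

lemma walk_edge_mem_of_lt {u' v : V} (p : G.Walk u' v) {i : ℕ} (hi : i < p.length) :
    s(p.getVert i, p.getVert (i+1)) ∈ p.edges := by
  rw [walk_edges_eq_map]
  exact List.mem_map.2 ⟨i, List.mem_range.2 hi, rfl⟩

lemma walk_getElem_edges {u' v : V} (p : G.Walk u' v) {j : ℕ} (hj : j < p.edges.length) :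
    p.edges[j]'hj = s(p.getVert j, p.getVert (j+1)) := by
  have h := List.getElem_of_eq (walk_edges_eq_map p) hj
  rw [h, List.getElem_map, List.getElem_range]

lemma walk_indexOf_edge {u' v : V} {p : G.Walk u' v} {e : Sym2 V} (he : e ∈ p.edges) :
    p.edges.idxOf e < p.length ∧
      e = s(p.getVert (p.edges.idxOf e), p.getVert (p.edges.idxOf e + 1)) := by
  have hlt : p.edges.idxOf e < p.edges.length := List.idxOf_lt_length_iff.2 he
  have h1 : p.edges[p.edges.idxOf e]'hlt = e := List.getElem_idxOf hlt
  rw [walk_getElem_edges p hlt] at h1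
  exact ⟨by simpa [p.length_edges] using hlt, h1.symm⟩

/-- an edge of a cycle containing the base point is the first or the last edge -/
lemma cycle_start_edge (hc : w.IsCycle) {i : ℕ} (hi : i < w.length)
    (hu : u ∈ s(w.getVert i, w.getVert (i+1))) : i = 0 ∨ i = w.length - 1 := by
  have hn := hc.three_le_length
  have inj := isCycle_getVert_inj hc
  have g0 : w.getVert 0 = u := w.getVert_zero
  have gn : w.getVert w.length = u := w.getVert_length
  rcases Sym2.mem_iff.1 hu with h | h
  · left
    by_contra h0
    have : i = w.length := inj i (by omega) (by omega) w.length (by omega) le_rfl (h.symm.trans gn.symm)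
    omega
  · right
    have : i + 1 = w.length := inj (i+1) (by omega) (by omega) w.length (by omega) le_rfl
      (h.symm.trans gn.symm)
    omega

/-- two distinct edges of a cycle sharing a vertex have different parity positions,
    unless they both contain the base point. -/
lemma cycle_parity (hc : w.IsCycle) {e₁ e₂ : Sym2 V} (h1 : e₁ ∈ w.edges) (h2 : e₂ ∈ w.edges)
    (hne : e₁ ≠ e₂) {t : V} (ht1 : t ∈ e₁) (ht2 : t ∈ e₂) :
    (w.edges.idxOf e₁ % 2 ≠ w.edges.idxOf e₂ % 2) ∨ (u ∈ e₁ ∧ u ∈ e₂) := by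
  have hn := hc.three_le_length
  have inj := isCycle_getVert_inj hc
  have g0 : w.getVert 0 = u := w.getVert_zero
  have gn : w.getVert w.length = u := w.getVert_length
  obtain ⟨hi, hei⟩ := walk_indexOf_edge h1
  obtain ⟨hj, hej⟩ := walk_indexOf_edge h2
  set i := w.edges.idxOf e₁ with hidef
  set j := w.edges.idxOf e₂ with hjdef
  have hij : i ≠ j := fun h => hne (hei.trans (by rw [h, ← hej]))
  rw [hei] at ht1; rw [hej] at ht2
  rcases Sym2.mem_iff.1 ht1 with hti | hti <;> rcases Sym2.mem_iff.1 ht2 with htj | htj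
  · -- t = g i and t = g j
    exfalso
    have hgij : w.getVert i = w.getVert j := hti.symm.trans htj
    rcases Nat.eq_zero_or_pos i with h0 | h0
    · rcases Nat.eq_zero_or_pos j with h0' | h0'
      · exact hij (h0.trans h0'.symm)
      · have : j = w.length := inj j (by omega) (by omega) w.length (by omega) le_rfl
          (by rw [← hgij, h0, g0, gn])
        omega
    · rcases Nat.eq_zero_or_pos j with h0' | h0'
      · have : i = w.length := inj i (by omega) (by omega) w.length (by omega) le_rfl
          (by rw [hgij, h0', g0, gn])
        omega
      · exact hij (inj i (by omega) (by omega) j (by omega) (by omega) hgij)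
  · -- t = g i and t = g (j+1)
    have hgij : w.getVert i = w.getVert (j+1) := hti.symm.trans htj
    rcases Nat.eq_zero_or_pos i with h0 | h0
    · have : j + 1 = w.length := inj (j+1) (by omega) (by omega) w.length (by omega) le_rfl
        (by rw [← hgij, h0, g0, gn])
      refine Or.inr ⟨?_, ?_⟩
      · rw [hei, h0]; exact Sym2.mem_iff.2 (Or.inl g0.symm)
      · rw [hej]; exact Sym2.mem_iff.2 (Or.inr (by rw [this, gn]))
    · have : i = j + 1 := inj i (by omega) (by omega) (j+1) (by omega) (by omega) hgij
      left; omega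
  · -- t = g (i+1) and t = g j
    have hgij : w.getVert j = w.getVert (i+1) := htj.symm.trans hti
    rcases Nat.eq_zero_or_pos j with h0 | h0
    · have : i + 1 = w.length := inj (i+1) (by omega) (by omega) w.length (by omega) le_rfl
        (by rw [← hgij, h0, g0, gn])
      refine Or.inr ⟨?_, ?_⟩
      · rw [hei]; exact Sym2.mem_iff.2 (Or.inr (by rw [this, gn]))
      · rw [hej, h0]; exact Sym2.mem_iff.2 (Or.inl g0.symm)
    · have : j = i + 1 := inj j (by omega) (by omega) (i+1) (by omega) (by omega) hgij
      left; omega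
  · -- t = g (i+1) and t = g (j+1)
    exfalso
    exact hij (by
      have := inj (i+1) (by omega) (by omega) (j+1) (by omega) (by omega)
        (hti.symm.trans htj)
      omega)

end CycleAux

section CycleAux2
variable {V : Type*} [DecidableEq V] {G : SimpleGraph V} {u : V} {w : G.Walk u u}

/-- at most two edges of a cycle contain the base point -/
lemma cycle_at_most_two (hc : w.IsCycle) {e₁ e₂ e₃ : Sym2 V}
    (h1 : e₁ ∈ w.edges) (h2 : e₂ ∈ w.edges) (h3 : e₃ ∈ w.edges)
    (hu1 : u ∈ e₁) (hu2 : u ∈ e₂) (hu3 : u ∈ e₃) (hne : e₁ ≠ e₂) :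
    e₃ = e₁ ∨ e₃ = e₂ := by
  obtain ⟨hi, hei⟩ := walk_indexOf_edge h1
  obtain ⟨hj, hej⟩ := walk_indexOf_edge h2
  obtain ⟨hk, hek⟩ := walk_indexOf_edge h3
  have d1 := cycle_start_edge hc hi (hei ▸ hu1)
  have d2 := cycle_start_edge hc hj (hej ▸ hu2)
  have d3 := cycle_start_edge hc hk (hek ▸ hu3)
  have hij : w.edges.idxOf e₁ ≠ w.edges.idxOf e₂ :=
    fun h => hne (hei.trans (by rw [h, ← hej]))
  have : w.edges.idxOf e₃ = w.edges.idxOf e₁ ∨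
      w.edges.idxOf e₃ = w.edges.idxOf e₂ := by omega
  rcases this with h | h
  · left; rw [hek, h, ← hei]
  · right; rw [hek, h, ← hej]

/-- every support vertex of a cycle lies on two distinct edges of the cycle -/
lemma cycle_two_neighbors (hc : w.IsCycle) {t : V} (ht : t ∈ w.support) :
    ∃ p q, p ≠ q ∧ s(t, p) ∈ w.edges ∧ s(t, q) ∈ w.edges := by
  have hn := hc.three_le_length
  have inj := isCycle_getVert_inj hc
  have g0 : w.getVert 0 = u := w.getVert_zero
  have gn : w.getVert w.length = u := w.getVert_length
  obtain ⟨m, hm, hmle⟩ := Walk.mem_support_iff_exists_getVert.1 ht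
  -- normalize m to [0, length)
  obtain ⟨m', hm', hmlt⟩ : ∃ m', w.getVert m' = t ∧ m' < w.length := by
    rcases Nat.lt_or_ge m w.length with h | h
    · exact ⟨m, hm, h⟩
    · have : m = w.length := by omega
      exact ⟨0, by rw [g0, ← gn, ← this, hm], by omega⟩
  rcases Nat.eq_zero_or_pos m' with h0 | h0
  · refine ⟨w.getVert 1, w.getVert (w.length - 1), ?_, ?_, ?_⟩
    · intro h
      have := inj 1 (by omega) (by omega) (w.length - 1) (by omega) (by omega) h
      omega
    · have := walk_edge_mem_of_lt w (show 0 < w.length by omega)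
      have ht0 : w.getVert 0 = t := by rw [← hm', h0]
      rwa [show (0:ℕ)+1 = 1 from rfl, ht0] at this
    · have hlt : w.length - 1 < w.length := by omega
      have hmem := walk_edge_mem_of_lt w hlt
      rw [show w.length - 1 + 1 = w.length by omega, gn] at hmem
      have htu : t = u := by rw [← hm', h0, g0]
      rw [htu]
      rwa [Sym2.eq_swap] at hmem
  · rcases Nat.eq_zero_or_pos (m' - 1) with h1 | h1
    · -- m' = 1
      have hm1 : m' = 1 := by omega
      refine ⟨w.getVert 2, w.getVert 0, ?_, ?_, ?_⟩
      · intro h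
        have := inj 2 (by omega) (by omega) w.length (by omega) le_rfl
          (h.trans (g0.trans gn.symm))
        omega
      · have := walk_edge_mem_of_lt w (show 1 < w.length by omega)
        have ht1 : w.getVert 1 = t := by rw [← hm', hm1]
        rwa [show (1:ℕ)+1 = 2 from rfl, ht1] at this
      · have := walk_edge_mem_of_lt w (show 0 < w.length by omega)
        rw [show (0:ℕ)+1 = 1 from rfl, ← hm1, hm'] at this
        rwa [Sym2.eq_swap] at this
    · refine ⟨w.getVert (m' + 1), w.getVert (m' - 1), ?_, ?_, ?_⟩
      · intro h
        have := inj (m'+1) (by omega) (by omega) (m'-1) (by omega) (by omega) h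
        omega
      · have := walk_edge_mem_of_lt w hmlt
        rwa [hm'] at this
      · have hlt : m' - 1 < w.length := by omega
        have := walk_edge_mem_of_lt w hlt
        rw [show m' - 1 + 1 = m' by omega, hm'] at this
        rwa [Sym2.eq_swap] at this

/-- membership in support vs tail of support for nontrivial closed walks -/
lemma mem_support_iff_mem_tail (hn : 1 ≤ w.length) {x : V} :
    x ∈ w.support ↔ x ∈ w.support.tail := by
  constructor
  · intro hx
    obtain ⟨m, hm, hmle⟩ := Walk.mem_support_iff_exists_getVert.1 hx
    have hrepr : w.support.tail = (List.range w.length).map (fun i => w.getVert (i+1)) := by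
      rw [walk_support_eq_map, List.range_succ_eq_map, List.map_cons, List.tail_cons, List.map_map]
      rfl
    rw [hrepr]
    rcases Nat.eq_zero_or_pos m with h0 | h0
    · refine List.mem_map.2 ⟨w.length - 1, List.mem_range.2 (by omega), ?_⟩
      rw [show w.length - 1 + 1 = w.length by omega, w.getVert_length, ← hm, h0, w.getVert_zero]
    · exact List.mem_map.2 ⟨m - 1, List.mem_range.2 (by omega), by rw [show m - 1 + 1 = m by omega, hm]⟩
  · intro hx
    exact List.mem_of_mem_tail hx

end CycleAux2

/-- In a graph of max degree 2, three distinct vertices of degree ≤ 1 cannot all be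
connected to each other. -/
lemma not_reachable_three {W : Type*} [Fintype W] (D : SimpleGraph W)
    (hdeg : ∀ t, (D.neighborSet t).ncard ≤ 2)
    {a b c : W} (hab : a ≠ b) (hac : a ≠ c) (hbc : b ≠ c)
    (ha : (D.neighborSet a).ncard ≤ 1) (hb : (D.neighborSet b).ncard ≤ 1)
    (hc : (D.neighborSet c).ncard ≤ 1)
    (h1 : D.Reachable a b) (h2 : D.Reachable a c) : False := by
  classical
  have pair_le : ∀ {x y z : W}, D.Adj z x → D.Adj z y → x ≠ y →
      2 ≤ (D.neighborSet z).ncard := by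
    intro x y z h1 h2 hxy
    have : ({x, y} : Set W) ⊆ D.neighborSet z := by
      rintro t (rfl | rfl)
      exacts [h1, h2]
    calc 2 = ({x, y} : Set W).ncard := (Set.ncard_pair hxy).symm
    _ ≤ _ := Set.ncard_le_ncard this (Set.toFinite _)
  have triple_le : ∀ {x y y' z : W}, D.Adj z x → D.Adj z y → D.Adj z y' →
      x ≠ y → x ≠ y' → y ≠ y' → 3 ≤ (D.neighborSet z).ncard := by
    intro x y y' z h1 h2 h3 hxy hxy' hyy'
    have hsub : ({x, y, y'} : Set W) ⊆ D.neighborSet z := by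
      rintro t (rfl | rfl | rfl)
      exacts [h1, h2, h3]
    have hcard : ({x, y, y'} : Set W).ncard = 3 := by
      rw [Set.ncard_insert_of_notMem (by simp [hxy, hxy']) (Set.toFinite _),
        Set.ncard_pair hyy']
    calc 3 = ({x, y, y'} : Set W).ncard := hcard.symm
    _ ≤ _ := Set.ncard_le_ncard hsub (Set.toFinite _)
  obtain ⟨q⟩ := h1.symm.trans h2
  obtain ⟨p, hp⟩ : ∃ p : D.Walk b c, p.IsPath := ⟨q.toPath.1, q.toPath.2⟩
  have hlen : 1 ≤ p.length := by
    rcases Nat.eq_zero_or_pos p.length with h0 | h0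
    · exact absurd (p.eq_of_length_eq_zero h0) hbc
    · exact h0
  have pinj := isPath_getVert_inj hp
  have g0 : p.getVert 0 = b := p.getVert_zero
  have gn : p.getVert p.length = c := p.getVert_length
  by_cases haP : a ∈ p.support
  · obtain ⟨m, hm, hmle⟩ := Walk.mem_support_iff_exists_getVert.1 haP
    have hm0 : m ≠ 0 := fun h => hab (by rw [← hm, h, g0])
    have hmn : m ≠ p.length := fun h => hac (by rw [← hm, h, gn])
    have had1 : D.Adj a (p.getVert (m+1)) := hm ▸ p.adj_getVert_succ (by omega)
    have had2 : D.Adj a (p.getVert (m-1)) := by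
      have := p.adj_getVert_succ (i := m - 1) (by omega)
      rw [show m - 1 + 1 = m by omega, hm] at this
      exact this.symm
    have hne : p.getVert (m+1) ≠ p.getVert (m-1) := by
      intro h
      have := pinj (m+1) (by omega) (m-1) (by omega) h
      omega
    have := pair_le had1 had2 hne
    omega
  · obtain ⟨q2⟩ := h1
    obtain ⟨x, y, hxy, hxS, hyS⟩ := exists_boundary q2 {v | v ∈ p.support} haP p.start_mem_support
    obtain ⟨m, hm, hmle⟩ := Walk.mem_support_iff_exists_getVert.1 hyS
    have hxny : ∀ i, i ≤ p.length → x ≠ p.getVert i := by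
      intro i hi h
      exact hxS (h ▸ getVert_mem_support p hi)
    rcases Nat.eq_zero_or_pos m with h0 | h0
    · -- y = b
      have hyb : y = b := by rw [← hm, h0, g0]
      have had1 : D.Adj b (p.getVert 1) := by
        have := p.adj_getVert_succ (i := 0) (by omega)
        rwa [g0] at this
      have had2 : D.Adj b x := (hyb ▸ hxy).symm
      have := pair_le had2 had1 (fun h => hxny 1 (by omega) h)
      omega
    · rcases Nat.lt_or_ge m p.length with hmlt | hge
      · -- interior
        have had1 : D.Adj y (p.getVert (m+1)) := hm ▸ p.adj_getVert_succ (by omega)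
        have had2 : D.Adj y (p.getVert (m-1)) := by
          have := p.adj_getVert_succ (i := m - 1) (by omega)
          rw [show m - 1 + 1 = m by omega, hm] at this
          exact this.symm
        have had3 : D.Adj y x := hxy.symm
        have hdy := hdeg y
        have := triple_le had3 had1 had2
          (fun h => hxny (m+1) (by omega) h)
          (fun h => hxny (m-1) (by omega) h)
          (fun h => by have := pinj (m+1) (by omega) (m-1) (by omega) h; omega)
        omega
      · -- y = c
        have hmn : m = p.length := by omega
        have hyc : y = c := by rw [← hm, hmn, gn]
        have had1 : D.Adj c (p.getVert (p.length - 1)) := by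
          have := p.adj_getVert_succ (i := p.length - 1) (by omega)
          rw [show p.length - 1 + 1 = p.length by omega, gn] at this
          exact this.symm
        have had2 : D.Adj c x := (hyc ▸ hxy).symm
        have := pair_le had2 had1 (fun h => hxny (p.length - 1) (by omega) h)
        omega

lemma colorable_mono {W : Type*} {K₁ K₂ : SimpleGraph W} (h : K₁.edgeSet ⊆ K₂.edgeSet) :
    Is3EdgeColorable K₂ → Is3EdgeColorable K₁ :=
  fun ⟨c, hc⟩ => ⟨c, fun e₁ h1 e₂ h2 hne hsh => hc e₁ (h h1) e₂ (h h2) hne hsh⟩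

/-- One extra deleted edge suffices to extend a colouring over a vertex of degree ≤ 3. -/
lemma lemmaB {W : Type*} [Fintype W] (J : SimpleGraph W)
    (hdeg : ∀ x, (J.neighborSet x).ncard ≤ 3) (v : W)
    (hcol : Is3EdgeColorable (J.deleteEdges {e | v ∈ e})) :
    ∃ F : Finset (Sym2 W), ↑F ⊆ J.edgeSet ∧ F.card ≤ 1 ∧
      Is3EdgeColorable (J.deleteEdges ↑F) := by
  classical
  obtain ⟨c, hc⟩ := hcol
  set J' := J.deleteEdges {e | v ∈ e} with hJ'def
  have hJ'E : J'.edgeSet = J.edgeSet \ {e | v ∈ e} := SimpleGraph.edgeSet_deleteEdges _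
  set N := J.neighborSet v with hNdef
  have hNfin : N.Finite := Set.toFinite _
  have hN3 : N.ncard ≤ 3 := hdeg v
  -- each neighbour of `v` has a free colour
  have avail_ne : ∀ (c' : Sym2 W → Fin 3) (x : W), J.Adj v x →
      ∃ d : Fin 3, ∀ e ∈ J'.edgeSet, x ∈ e → c' e ≠ d := by
    intro c' x hx
    by_contra hcon
    push_neg at hcon
    have hsub : (Set.univ : Set (Fin 3)) ⊆ (fun y => c' s(x, y)) '' (J'.neighborSet x) := by
      rintro d -
      obtain ⟨e, he, hxe, hce⟩ := hcon d
      obtain ⟨y, rfl⟩ := Sym2.mem_iff_exists.1 hxe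
      exact ⟨y, (SimpleGraph.mem_edgeSet _).1 he, hce⟩
    have h1 : 3 ≤ ((fun y => c' s(x, y)) '' (J'.neighborSet x)).ncard := by
      have := Set.ncard_le_ncard hsub (Set.toFinite _)
      simpa [Set.ncard_univ] using this
    have h2 := Set.ncard_image_le (s := J'.neighborSet x) (f := fun y => c' s(x, y))
      (Set.toFinite _)
    have h3 : J'.neighborSet x ⊆ J.neighborSet x \ {v} := by
      intro q hq
      have hq' : J.Adj x q ∧ s(x, q) ∉ {e : Sym2 W | v ∈ e} := by
        simpa [hJ'def, SimpleGraph.deleteEdges_adj] using hq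
      refine ⟨hq'.1, fun h => hq'.2 ?_⟩
      simp only [Set.mem_singleton_iff] at h
      exact h ▸ Sym2.mem_iff.2 (Or.inr rfl)
    have h4 : (J.neighborSet x \ {v}).ncard = (J.neighborSet x).ncard - 1 :=
      Set.ncard_diff_singleton_of_mem hx.symm
    have h5 := Set.ncard_le_ncard h3 (Set.toFinite _)
    have h6 := hdeg x
    omega
  -- the uniform extension builder: keep two edges at `v`, delete the rest
  have build : ∀ (c' : Sym2 W → Fin 3), IsProper3EdgeColoring J' c' →
      ∀ (p q : W) (α β : Fin 3), p ≠ q → α ≠ β → J.Adj v p → J.Adj v q →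
      (∀ e ∈ J'.edgeSet, p ∈ e → c' e ≠ α) → (∀ e ∈ J'.edgeSet, q ∈ e → c' e ≠ β) →
      ∃ F : Finset (Sym2 W), ↑F ⊆ J.edgeSet ∧ F.card ≤ 1 ∧
        Is3EdgeColorable (J.deleteEdges ↑F) := by
    intro c' hc' p q α β hpq hαβ hvp hvq hpα hqβ
    have hvnp : v ≠ p := hvp.ne
    have hvnq : v ≠ q := hvq.ne
    set F : Finset (Sym2 W) := (hNfin.toFinset \ {p, q}).image (fun r => s(v, r)) with hFdef
    have hFsub : ↑F ⊆ J.edgeSet := by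
      intro e he
      simp only [hFdef, Finset.coe_image, Set.mem_image, Finset.mem_coe,
        Finset.mem_sdiff, Set.Finite.mem_toFinset] at he
      obtain ⟨r, ⟨hr, -⟩, rfl⟩ := he
      exact (SimpleGraph.mem_edgeSet _).2 hr
    have hFcard : F.card ≤ 1 := by
      have h1 : F.card ≤ (hNfin.toFinset \ {p, q}).card := Finset.card_image_le
      have h2 : ({p, q} : Finset W) ⊆ hNfin.toFinset := by
        intro r hr
        simp only [Finset.mem_insert, Finset.mem_singleton] at hr
        rcases hr with rfl | rfl <;> simp [Set.Finite.mem_toFinset] <;>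
          [exact hvp; exact hvq]
      have h3 : (hNfin.toFinset \ ({p, q} : Finset W)).card
          = hNfin.toFinset.card - ({p, q} : Finset W).card := Finset.card_sdiff_of_subset h2
      have h4 : ({p, q} : Finset W).card = 2 := by
        rw [Finset.card_insert_of_notMem (by simpa using hpq), Finset.card_singleton]
      have h5 : hNfin.toFinset.card = N.ncard := (Set.ncard_eq_toFinset_card N hNfin).symm
      omega
    refine ⟨F, hFsub, hFcard, ⟨fun e => if e = s(v, p) then α else if e = s(v, q) then β
      else c' e, ?_⟩⟩
    have hKE : (J.deleteEdges (↑F : Set (Sym2 W))).edgeSet = J.edgeSet \ ↑F :=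
      SimpleGraph.edgeSet_deleteEdges _
    have hclass : ∀ e ∈ (J.deleteEdges (↑F : Set (Sym2 W))).edgeSet, v ∈ e →
        e = s(v, p) ∨ e = s(v, q) := by
      intro e he hv
      rw [hKE] at he
      obtain ⟨b, rfl⟩ := Sym2.mem_iff_exists.1 hv
      have hbN : b ∈ N := (SimpleGraph.mem_edgeSet _).1 he.1
      by_cases hb : b = p ∨ b = q
      · rcases hb with rfl | rfl
        · exact Or.inl rfl
        · exact Or.inr rfl
      · push_neg at hb
        exact absurd (by
          simp only [hFdef, Finset.coe_image, Set.mem_image, Finset.mem_coe,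
            Finset.mem_sdiff, Set.Finite.mem_toFinset]
          exact ⟨b, ⟨hbN, by simp [hb.1, hb.2]⟩, rfl⟩) he.2
    have hold : ∀ e ∈ (J.deleteEdges (↑F : Set (Sym2 W))).edgeSet, v ∉ e →
        e ∈ J'.edgeSet := by
      intro e he hv
      rw [hKE] at he
      rw [hJ'E]
      exact ⟨he.1, hv⟩
    have hsvp_ne_svq : s(v, p) ≠ s(v, q) := by
      intro h
      rcases Sym2.eq_iff.1 h with ⟨-, h'⟩ | ⟨h', -⟩
      exacts [hpq h', hvnq h']
    -- properness
    intro e₁ h1 e₂ h2 hne hsh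
    obtain ⟨t, ht1, ht2⟩ := hsh
    show (if e₁ = s(v, p) then α else if e₁ = s(v, q) then β else c' e₁)
      ≠ (if e₂ = s(v, p) then α else if e₂ = s(v, q) then β else c' e₂)
    -- helper for mixed case
    have mixed : ∀ e ∈ (J.deleteEdges (↑F : Set (Sym2 W))).edgeSet,
        e ≠ s(v, p) → e ≠ s(v, q) → ∀ t', t' ∈ e →
          (t' ∈ s(v, p) → c' e ≠ α) ∧ (t' ∈ s(v, q) → c' e ≠ β) := by
      intro e he hep heq t' ht'
      have hvne : v ∉ e := by
        intro hv
        rcases hclass e he hv with h | h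
        exacts [hep h, heq h]
      have heJ' : e ∈ J'.edgeSet := hold e he hvne
      constructor
      · intro hmem
        rcases Sym2.mem_iff.1 hmem with rfl | rfl
        · exact absurd ht' hvne
        · exact hpα e heJ' ht'
      · intro hmem
        rcases Sym2.mem_iff.1 hmem with rfl | rfl
        · exact absurd ht' hvne
        · exact hqβ e heJ' ht'
    by_cases k1 : e₁ = s(v, p)
    · rw [if_pos k1]
      by_cases k2 : e₂ = s(v, q)
      · rw [if_neg (by rw [k2]; exact hsvp_ne_svq.symm), if_pos k2]
        exact hαβ
      · have k2' : e₂ ≠ s(v, p) := fun h => hne (k1.trans h.symm)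
        rw [if_neg k2', if_neg k2]
        exact fun h => (mixed e₂ h2 k2' k2 t ht2).1 (k1 ▸ ht1) h.symm
    · by_cases k1' : e₁ = s(v, q)
      · rw [if_neg k1, if_pos k1']
        by_cases k2 : e₂ = s(v, p)
        · rw [if_pos k2]
          exact hαβ.symm
        · have k2' : e₂ ≠ s(v, q) := fun h => hne (k1'.trans h.symm)
          rw [if_neg k2, if_neg k2']
          exact fun h => (mixed e₂ h2 k2 k2' t ht2).2 (k1' ▸ ht1) h.symm
      · rw [if_neg k1, if_neg k1']
        by_cases k2 : e₂ = s(v, p)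
        · rw [if_pos k2]
          exact (mixed e₁ h1 k1 k1' t ht1).1 (k2 ▸ ht2)
        · by_cases k2' : e₂ = s(v, q)
          · rw [if_neg k2, if_pos k2']
            exact (mixed e₁ h1 k1 k1' t ht1).2 (k2' ▸ ht2)
          · rw [if_neg k2, if_neg k2']
            have hv1 : v ∉ e₁ := by
              intro hv
              rcases hclass e₁ h1 hv with h | h
              exacts [k1 h, k1' h]
            have hv2 : v ∉ e₂ := by
              intro hv
              rcases hclass e₂ h2 hv with h | h
              exacts [k2 h, k2' h]
            exact hc' e₁ (hold e₁ h1 hv1) e₂ (hold e₂ h2 hv2) hne ⟨t, ht1, ht2⟩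
  -- Case analysis on the neighbourhood of v
  rcases Set.eq_empty_or_nonempty N with hN0 | hNne
  · -- no neighbours: nothing to extend
    refine ⟨∅, by simp, by simp, ?_⟩
    refine colorable_mono ?_ ⟨c, hc⟩
    rw [SimpleGraph.edgeSet_deleteEdges, hJ'E]
    rintro e ⟨heJ, -⟩
    refine ⟨heJ, fun hv => ?_⟩
    obtain ⟨b, rfl⟩ := Sym2.mem_iff_exists.1 hv
    have hbN : b ∈ N := (SimpleGraph.mem_edgeSet _).1 heJ
    rw [hN0] at hbN
    exact hbN
  obtain ⟨a, haN⟩ := hNne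
  have hva : J.Adj v a := haN
  rcases Nat.lt_or_ge N.ncard 3 with hN2 | hN3'
  · -- at most two neighbours: keep one edge at v, delete the rest
    obtain ⟨α, hα⟩ := avail_ne c a hva
    set F : Finset (Sym2 W) := (hNfin.toFinset \ {a}).image (fun r => s(v, r)) with hFdef
    have hFsub : ↑F ⊆ J.edgeSet := by
      intro e he
      simp only [hFdef, Finset.coe_image, Set.mem_image, Finset.mem_coe,
        Finset.mem_sdiff, Set.Finite.mem_toFinset] at he
      obtain ⟨r, ⟨hr, -⟩, rfl⟩ := he
      exact (SimpleGraph.mem_edgeSet _).2 hr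
    have hFcard : F.card ≤ 1 := by
      have h1 : F.card ≤ (hNfin.toFinset \ {a}).card := Finset.card_image_le
      have h2 : ({a} : Finset W) ⊆ hNfin.toFinset := by
        intro r hr
        simp only [Finset.mem_singleton] at hr
        subst hr
        simpa [Set.Finite.mem_toFinset] using haN
      have h3 := Finset.card_sdiff_of_subset h2
      have h5 : hNfin.toFinset.card = N.ncard := (Set.ncard_eq_toFinset_card N hNfin).symm
      simp only [Finset.card_singleton] at h3
      omega
    refine ⟨F, hFsub, hFcard, ⟨fun e => if e = s(v, a) then α else c e, ?_⟩⟩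
    have hKE : (J.deleteEdges (↑F : Set (Sym2 W))).edgeSet = J.edgeSet \ ↑F :=
      SimpleGraph.edgeSet_deleteEdges _
    have hclass : ∀ e ∈ (J.deleteEdges (↑F : Set (Sym2 W))).edgeSet, v ∈ e → e = s(v, a) := by
      intro e he hv
      rw [hKE] at he
      obtain ⟨b, rfl⟩ := Sym2.mem_iff_exists.1 hv
      have hbN : b ∈ N := (SimpleGraph.mem_edgeSet _).1 he.1
      by_cases hb : b = a
      · rw [hb]
      · exact absurd (by
          simp only [hFdef, Finset.coe_image, Set.mem_image, Finset.mem_coe,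
            Finset.mem_sdiff, Set.Finite.mem_toFinset]
          exact ⟨b, ⟨hbN, by simp [hb]⟩, rfl⟩) he.2
    have hold : ∀ e ∈ (J.deleteEdges (↑F : Set (Sym2 W))).edgeSet, v ∉ e →
        e ∈ J'.edgeSet := by
      intro e he hv
      rw [hKE] at he
      rw [hJ'E]
      exact ⟨he.1, hv⟩
    intro e₁ h1 e₂ h2 hne hsh
    obtain ⟨t, ht1, ht2⟩ := hsh
    show (if e₁ = s(v, a) then α else c e₁) ≠ (if e₂ = s(v, a) then α else c e₂)
    have mixed : ∀ e ∈ (J.deleteEdges (↑F : Set (Sym2 W))).edgeSet, e ≠ s(v, a) →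
        ∀ t', t' ∈ e → t' ∈ s(v, a) → c e ≠ α := by
      intro e he hea t' ht' hmem
      have hvne : v ∉ e := fun hv => hea (hclass e he hv)
      have heJ' : e ∈ J'.edgeSet := hold e he hvne
      rcases Sym2.mem_iff.1 hmem with rfl | rfl
      · exact absurd ht' hvne
      · exact hα e heJ' ht'
    by_cases k1 : e₁ = s(v, a)
    · have k2 : e₂ ≠ s(v, a) := fun h => hne (k1.trans h.symm)
      rw [if_pos k1, if_neg k2]
      exact fun h => mixed e₂ h2 k2 t ht2 (k1 ▸ ht1) h.symm
    · by_cases k2 : e₂ = s(v, a)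
      · rw [if_neg k1, if_pos k2]
        exact mixed e₁ h1 k1 t ht1 (k2 ▸ ht2)
      · rw [if_neg k1, if_neg k2]
        have hv1 : v ∉ e₁ := fun hv => k1 (hclass e₁ h1 hv)
        have hv2 : v ∉ e₂ := fun hv => k2 (hclass e₂ h2 hv)
        exact hc e₁ (hold e₁ h1 hv1) e₂ (hold e₂ h2 hv2) hne ⟨t, ht1, ht2⟩
  · -- exactly three neighbours: the Kempe chain argument
    have hNc : N.ncard = 3 := le_antisymm hN3 hN3'
    obtain ⟨a1, b1, c1, hab1, hac1, hbc1, hNeq⟩ := Set.ncard_eq_three.1 hNc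
    have ha1N : a1 ∈ N := by rw [hNeq]; simp
    have hb1N : b1 ∈ N := by rw [hNeq]; simp
    have hc1N : c1 ∈ N := by rw [hNeq]; simp
    obtain ⟨α1, hα1⟩ := avail_ne c a1 ha1N
    obtain ⟨β1, hβ1⟩ := avail_ne c b1 hb1N
    by_cases hgood : ∃ p ∈ N, ∃ q ∈ N, p ≠ q ∧ ∃ α β, α ≠ β ∧
        (∀ e ∈ J'.edgeSet, p ∈ e → c e ≠ α) ∧ (∀ e ∈ J'.edgeSet, q ∈ e → c e ≠ β)
    · obtain ⟨p, hpN, q, hqN, hpq, α, β, hαβ, hpα, hqβ⟩ := hgood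
      exact build c hc p q α β hpq hαβ hpN hqN hpα hqβ
    · push_neg at hgood
      -- all available colours agree: call it x₀
      set x₀ := α1 with hx₀def
      have huniq : ∀ r ∈ N, r ≠ a1 → ∀ d, (∀ e ∈ J'.edgeSet, r ∈ e → c e ≠ d) → d = x₀ := by
        intro r hr hrne d hd
        by_contra hdx
        obtain ⟨e, he, hae, hce⟩ := hgood r hr a1 ha1N hrne d x₀ hdx hd
        exact hα1 e he hae hce
      have hβx : β1 = x₀ := huniq b1 hb1N hab1.symm β1 hβ1
      have availb : ∀ e ∈ J'.edgeSet, b1 ∈ e → c e ≠ x₀ := hβx ▸ hβ1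
      have availa : ∀ e ∈ J'.edgeSet, a1 ∈ e → c e ≠ x₀ := hα1
      have availc : ∀ e ∈ J'.edgeSet, c1 ∈ e → c e ≠ x₀ := by
        obtain ⟨γ1, hγ1⟩ := avail_ne c c1 hc1N
        have := huniq c1 hc1N hac1.symm γ1 hγ1
        exact this ▸ hγ1
      set y := x₀ + 1 with hydef
      have hyx : y ≠ x₀ := by
        intro h
        have := congrArg Fin.val h
        rw [Fin.val_add] at this
        omega
      -- the Kempe chain graph
      set D : SimpleGraph W :=
        { Adj := fun p q => J'.Adj p q ∧ (c s(p, q) = x₀ ∨ c s(p, q) = y)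
          symm := by
            refine ⟨?_⟩
            intro p q hpq
            refine ⟨hpq.1.symm, ?_⟩
            rw [Sym2.eq_swap]
            exact hpq.2
          loopless := ⟨fun p hp => J'.loopless.irrefl p hp.1⟩ } with hDdef
      have hDadj : ∀ p q : W, D.Adj p q ↔
          (J'.Adj p q ∧ (c s(p, q) = x₀ ∨ c s(p, q) = y)) := fun p q => Iff.rfl
      -- degree bounds in D
      have hsubsing : ∀ (t : W) (d : Fin 3), {q | D.Adj t q ∧ c s(t, q) = d}.Subsingleton := by
        intro t d q hq q' hq'
        by_contra hne
        have hqt : q ≠ t := fun h => D.loopless.irrefl t (h ▸ hq.1)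
        have hedne : s(t, q) ≠ s(t, q') := by
          intro h
          rcases Sym2.eq_iff.1 h with ⟨-, h'⟩ | ⟨h', h''⟩
          · exact hne h'
          · exact hqt h''
        have hm1 : s(t, q) ∈ J'.edgeSet := (SimpleGraph.mem_edgeSet _).2 hq.1.1
        have hm2 : s(t, q') ∈ J'.edgeSet := (SimpleGraph.mem_edgeSet _).2 hq'.1.1
        exact hc _ hm1 _ hm2 hedne ⟨t, Sym2.mem_iff.2 (Or.inl rfl), Sym2.mem_iff.2 (Or.inl rfl)⟩
          (hq.2.trans hq'.2.symm)
      have hDdeg : ∀ t, (D.neighborSet t).ncard ≤ 2 := by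
        intro t
        have hsub : D.neighborSet t ⊆
            {q | D.Adj t q ∧ c s(t, q) = x₀} ∪ {q | D.Adj t q ∧ c s(t, q) = y} := by
          intro q hq
          rcases hq.2 with h | h
          · exact Or.inl ⟨hq, h⟩
          · exact Or.inr ⟨hq, h⟩
        calc (D.neighborSet t).ncard ≤ _ := Set.ncard_le_ncard hsub (Set.toFinite _)
        _ ≤ _ + _ := Set.ncard_union_le _ _
        _ ≤ 2 := by
          have h1 := (Set.ncard_le_one_iff (Set.toFinite _)).2
            (fun ha hb => hsubsing t x₀ ha hb)
          have h2 := (Set.ncard_le_one_iff (Set.toFinite _)).2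
            (fun ha hb => hsubsing t y ha hb)
          omega
      have hDdeg1 : ∀ t, (∀ e ∈ J'.edgeSet, t ∈ e → c e ≠ x₀) →
          (D.neighborSet t).ncard ≤ 1 := by
        intro t hav
        have hsub : D.neighborSet t ⊆ {q | D.Adj t q ∧ c s(t, q) = y} := by
          intro q hq
          rcases hq.2 with h | h
          · exact absurd h (hav _ ((SimpleGraph.mem_edgeSet _).2 hq.1)
              (Sym2.mem_iff.2 (Or.inl rfl)))
          · exact ⟨hq, h⟩
        calc (D.neighborSet t).ncard ≤ _ := Set.ncard_le_ncard hsub (Set.toFinite _)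
        _ ≤ 1 := (Set.ncard_le_one_iff (Set.toFinite _)).2
            (fun ha hb => hsubsing t y ha hb)
      -- the chain from a1 and the swap
      set R : Set W := {t | D.Reachable a1 t} with hRdef
      have hRa : a1 ∈ R := by
        show D.Reachable a1 a1
        exact SimpleGraph.Reachable.refl _
      have hRcl : ∀ p q : W, p ∈ R → D.Adj p q → q ∈ R :=
        fun p q hp hadj => hp.trans hadj.reachable
      have hswap_all : ∀ e ∈ J'.edgeSet, (c e = x₀ ∨ c e = y) → (∃ t ∈ e, t ∈ R) →
          ∀ t' ∈ e, t' ∈ R := by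
        intro e he hcol hex t' ht'
        obtain ⟨t'', ht'', hR⟩ := hex
        obtain ⟨o, rfl⟩ := Sym2.mem_iff_exists.1 ht''
        rcases Sym2.mem_iff.1 ht' with rfl | rfl
        · exact hR
        · exact hRcl t'' t' hR ⟨(SimpleGraph.mem_edgeSet _).1 he, hcol⟩
      set c₁ : Sym2 W → Fin 3 := fun e =>
        if e ∈ J'.edgeSet ∧ (c e = x₀ ∨ c e = y) ∧ (∃ t ∈ e, t ∈ R)
        then (Equiv.swap x₀ y) (c e) else c e with hc₁def
      have hc1 : IsProper3EdgeColoring J' c₁ := by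
        intro e₁ h1 e₂ h2 hne hsh
        obtain ⟨t, ht1, ht2⟩ := hsh
        show (if e₁ ∈ J'.edgeSet ∧ (c e₁ = x₀ ∨ c e₁ = y) ∧ (∃ t' ∈ e₁, t' ∈ R)
            then (Equiv.swap x₀ y) (c e₁) else c e₁)
          ≠ (if e₂ ∈ J'.edgeSet ∧ (c e₂ = x₀ ∨ c e₂ = y) ∧ (∃ t' ∈ e₂, t' ∈ R)
            then (Equiv.swap x₀ y) (c e₂) else c e₂)
        have horig : c e₁ ≠ c e₂ := hc e₁ h1 e₂ h2 hne ⟨t, ht1, ht2⟩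
        by_cases k1 : (c e₁ = x₀ ∨ c e₁ = y) ∧ (∃ t' ∈ e₁, t' ∈ R) <;>
          by_cases k2 : (c e₂ = x₀ ∨ c e₂ = y) ∧ (∃ t' ∈ e₂, t' ∈ R)
        · rw [if_pos ⟨h1, k1⟩, if_pos ⟨h2, k2⟩]
          exact fun h => horig ((Equiv.swap x₀ y).injective h)
        · rw [if_pos ⟨h1, k1⟩, if_neg (fun h => k2 ⟨h.2.1, h.2.2⟩)]
          have htR : t ∈ R := hswap_all e₁ h1 k1.1 k1.2 t ht1
          have hcol2 : ¬(c e₂ = x₀ ∨ c e₂ = y) := fun h => k2 ⟨h, ⟨t, ht2, htR⟩⟩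
          intro h
          apply hcol2
          rcases k1.1 with h' | h'
          · rw [← h, h', Equiv.swap_apply_left]
            exact Or.inr rfl
          · rw [← h, h', Equiv.swap_apply_right]
            exact Or.inl rfl
        · rw [if_neg (fun h => k1 ⟨h.2.1, h.2.2⟩), if_pos ⟨h2, k2⟩]
          have htR : t ∈ R := hswap_all e₂ h2 k2.1 k2.2 t ht2
          have hcol1 : ¬(c e₁ = x₀ ∨ c e₁ = y) := fun h => k1 ⟨h, ⟨t, ht1, htR⟩⟩
          intro h
          apply hcol1
          rcases k2.1 with h' | h'
          · rw [h, h', Equiv.swap_apply_left]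
            exact Or.inr rfl
          · rw [h, h', Equiv.swap_apply_right]
            exact Or.inl rfl
        · rw [if_neg (fun h => k1 ⟨h.2.1, h.2.2⟩), if_neg (fun h => k2 ⟨h.2.1, h.2.2⟩)]
          exact horig
      -- choose the neighbour not on the chain
      have hchoice : ∃ b2, b2 ∈ N ∧ b2 ≠ a1 ∧ b2 ∉ R ∧
          (∀ e ∈ J'.edgeSet, b2 ∈ e → c e ≠ x₀) := by
        by_cases hbR : b1 ∈ R
        · refine ⟨c1, hc1N, hac1.symm, ?_, availc⟩
          intro hcR
          exact not_reachable_three D hDdeg hab1 hac1 hbc1 (hDdeg1 a1 availa)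
            (hDdeg1 b1 availb) (hDdeg1 c1 availc) hbR hcR
        · exact ⟨b1, hb1N, hab1.symm, hbR, availb⟩
      obtain ⟨b2, hb2N, hb2a, hb2R, availb2⟩ := hchoice
      have hunb2 : ∀ e ∈ J'.edgeSet, b2 ∈ e → c₁ e = c e := by
        intro e he hbe
        exact if_neg (fun hcond => hb2R (hswap_all e he hcond.2.1 hcond.2.2 b2 hbe))
      have availb2' : ∀ e ∈ J'.edgeSet, b2 ∈ e → c₁ e ≠ x₀ := by
        intro e he hbe
        rw [hunb2 e he hbe]
        exact availb2 e he hbe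
      have availa' : ∀ e ∈ J'.edgeSet, a1 ∈ e → c₁ e ≠ y := by
        intro e he hae
        by_cases hcy : c e = y
        · have heq : c₁ e = (Equiv.swap x₀ y) (c e) :=
            if_pos ⟨he, Or.inr hcy, ⟨a1, hae, hRa⟩⟩
          rw [heq, hcy, Equiv.swap_apply_right]
          exact Ne.symm hyx
        · by_cases hcx : c e = x₀
          · exact absurd hcx (availa e he hae)
          · have heq : c₁ e = c e := if_neg (fun hcond => by
              rcases hcond.2.1 with h | h
              exacts [hcx h, hcy h])
            rw [heq]
            exact hcy
      exact build c₁ hc1 a1 b2 y x₀ (Ne.symm hb2a) hyx ha1N hb2N availa' availb2'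

/-- deleting edges around a set `T` of vertices can be repaired by `|T|` edge deletions -/
lemma lemmaA {W : Type*} [Fintype W] (T : Finset W) :
    ∀ (J : SimpleGraph W), (∀ x, (J.neighborSet x).ncard ≤ 3) →
    Is3EdgeColorable (J.deleteEdges {e | ∃ x ∈ T, x ∈ e}) →
    ∃ F : Finset (Sym2 W), ↑F ⊆ J.edgeSet ∧ F.card ≤ T.card ∧
      Is3EdgeColorable (J.deleteEdges ↑F) := by
  classical
  induction T using Finset.induction_on with
  | empty =>
    intro J hdeg hcol
    refine ⟨∅, by simp, by simp, ?_⟩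
    refine colorable_mono ?_ hcol
    rw [SimpleGraph.edgeSet_deleteEdges, SimpleGraph.edgeSet_deleteEdges]
    intro e he
    exact ⟨he.1, by simp⟩
  | @insert v T' hvT ih =>
    intro J hdeg hcol
    set J2 := J.deleteEdges {e | v ∈ e} with hJ2
    have hsubnb : ∀ (s : Set (Sym2 W)) (x : W),
        (J.deleteEdges s).neighborSet x ⊆ J.neighborSet x := by
      intro s x q hq
      exact (SimpleGraph.deleteEdges_adj.1 hq).1
    have hdeg2 : ∀ x, (J2.neighborSet x).ncard ≤ 3 :=
      fun x => le_trans (Set.ncard_le_ncard (hsubnb _ x) (Set.toFinite _)) (hdeg x)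
    have hcol2 : Is3EdgeColorable (J2.deleteEdges {e | ∃ x ∈ T', x ∈ e}) := by
      refine colorable_mono ?_ hcol
      rw [SimpleGraph.edgeSet_deleteEdges, SimpleGraph.edgeSet_deleteEdges,
        SimpleGraph.edgeSet_deleteEdges]
      rintro e ⟨⟨heJ, hv⟩, hT⟩
      refine ⟨heJ, ?_⟩
      rintro ⟨x, hx, hxe⟩
      rcases Finset.mem_insert.1 hx with rfl | hx'
      exacts [hv hxe, hT ⟨x, hx', hxe⟩]
    obtain ⟨F', hF'sub, hF'card, hF'col⟩ := ih J2 hdeg2 hcol2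
    have hF'subJ : ↑F' ⊆ J.edgeSet := by
      intro e he
      have := hF'sub he
      rw [hJ2, SimpleGraph.edgeSet_deleteEdges] at this
      exact this.1
    set K := J.deleteEdges (↑F' : Set (Sym2 W)) with hK
    have hdegK : ∀ x, (K.neighborSet x).ncard ≤ 3 :=
      fun x => le_trans (Set.ncard_le_ncard (hsubnb _ x) (Set.toFinite _)) (hdeg x)
    have hcolK : Is3EdgeColorable (K.deleteEdges {e | v ∈ e}) := by
      refine colorable_mono ?_ hF'col
      rw [hK, hJ2, SimpleGraph.edgeSet_deleteEdges, SimpleGraph.edgeSet_deleteEdges,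
        SimpleGraph.edgeSet_deleteEdges, SimpleGraph.edgeSet_deleteEdges]
      rintro e ⟨⟨heJ, hF⟩, hv⟩
      exact ⟨⟨heJ, hv⟩, hF⟩
    obtain ⟨F'', hF''sub, hF''card, hF''col⟩ := lemmaB K hdegK v hcolK
    have hF''subJ : ↑F'' ⊆ J.edgeSet := by
      intro e he
      have := hF''sub he
      rw [hK, SimpleGraph.edgeSet_deleteEdges] at this
      exact this.1
    refine ⟨F' ∪ F'', ?_, ?_, ?_⟩
    · rw [Finset.coe_union]
      exact Set.union_subset hF'subJ hF''subJ
    · rw [Finset.card_insert_of_notMem hvT]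
      have := Finset.card_union_le F' F''
      omega
    · refine colorable_mono ?_ hF''col
      rw [hK, SimpleGraph.edgeSet_deleteEdges, SimpleGraph.edgeSet_deleteEdges,
        SimpleGraph.edgeSet_deleteEdges, Finset.coe_union]
      rintro e ⟨heJ, hun⟩
      exact ⟨⟨heJ, fun h => hun (Or.inl h)⟩, fun h => hun (Or.inr h)⟩

/-- If `H` is a subgraph of a bridgeless cubic graph `G` with resistance `k`, then any
cycle of `G` not contained in `H` misses at least `k` vertices of `H`. -/
theorem stmt_0 {V : Type*} [Fintype V] (G : SimpleGraph V)
    (hcubic : ∀ v, (G.neighborSet v).ncard = 3)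
    (hbridgeless : ∀ e ∈ G.edgeSet, ¬ G.IsBridge e)
    (H : G.Subgraph) (k : ℕ) (hres : resistance H.coe = k)
    (u : V) (w : G.Walk u u) (hcyc : w.IsCycle)
    (hnotin : ¬ (∀ e ∈ w.edges, e ∈ H.edgeSet)) :
    k ≤ (H.verts \ {v | v ∈ w.support}).ncard := by
  classical
  subst hres
  push_neg at hnotin
  obtain ⟨est, hestw, hestH⟩ := hnotin
  obtain ⟨a, b, rfl⟩ : ∃ a b, est = s(a, b) := by
    induction est using Sym2.ind with
    | _ x y => exact ⟨x, y, rfl⟩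
  have ha : a ∈ w.support := w.fst_mem_support_of_mem_edges hestw
  set w' := w.rotate a ha with hw'def
  have hcyc' : w'.IsCycle := hcyc.rotate ha
  have hedg : ∀ e, e ∈ w'.edges ↔ e ∈ w.edges := fun e => (w.rotate_edges a ha).mem_iff
  have hsup : ∀ x, x ∈ w'.support ↔ x ∈ w.support := by
    intro x
    have h1 := w.support_rotate a ha
    have hlen : 1 ≤ w.length := by have := hcyc.three_le_length; omega
    have hlen' : 1 ≤ w'.length := by have := hcyc'.three_le_length; omega
    rw [mem_support_iff_mem_tail hlen', mem_support_iff_mem_tail hlen, h1.mem_iff]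
  have hestw' : s(a, b) ∈ w'.edges := (hedg _).2 hestw
  have haest : a ∈ s(a, b) := Sym2.mem_iff.2 (Or.inl rfl)
  haveI : Fintype ↥H.verts := Fintype.ofFinite _
  -- vertices of H missed by the cycle
  set T : Finset ↥H.verts :=
    Finset.univ.filter (fun x : ↥H.verts => (x : V) ∉ w.support) with hTdef
  -- degrees in H.coe
  have hdeg : ∀ x : ↥H.verts, ((H.coe).neighborSet x).ncard ≤ 3 := by
    intro x
    have himg : Subtype.val '' (H.coe.neighborSet x) ⊆ G.neighborSet (x : V) := by
      rintro _ ⟨y, hy, rfl⟩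
      have hy2 : H.coe.Adj x y := hy
      rw [Subgraph.coe_adj] at hy2
      exact H.adj_sub hy2
    calc (H.coe.neighborSet x).ncard
        = (Subtype.val '' (H.coe.neighborSet x)).ncard :=
          (Set.ncard_image_of_injective _ Subtype.val_injective).symm
      _ ≤ (G.neighborSet (x : V)).ncard := Set.ncard_le_ncard himg (Set.toFinite _)
      _ ≤ 3 := le_of_eq (hcubic _)
  -- mapping H.coe edges down to V
  have hmapH : ∀ e : Sym2 ↥H.verts, e ∈ H.coe.edgeSet → Sym2.map Subtype.val e ∈ H.edgeSet := by
    intro e he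
    induction e using Sym2.ind with
    | _ x y =>
      rw [Sym2.map_pair_eq]
      rw [SimpleGraph.mem_edgeSet] at he
      rw [Subgraph.mem_edgeSet]
      rwa [Subgraph.coe_adj] at he
  -- the explicit colouring of H.coe minus T-incident edges
  set col : Sym2 ↥H.verts → Fin 3 := fun e =>
    if Sym2.map Subtype.val e ∈ w'.edges
    then (if (w'.edges).idxOf (Sym2.map Subtype.val e) % 2 = 0 then (0 : Fin 3) else 1)
    else 2 with hcoldef
  have hcolT : Is3EdgeColorable (H.coe.deleteEdges {e | ∃ x ∈ T, x ∈ e}) := by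
    refine ⟨col, ?_⟩
    intro e₁ h1 e₂ h2 hne hsh
    obtain ⟨t, ht1, ht2⟩ := hsh
    rw [SimpleGraph.edgeSet_deleteEdges] at h1 h2
    have hsupp : ∀ (e : Sym2 ↥H.verts), e ∈ H.coe.edgeSet \ {e | ∃ x ∈ T, x ∈ e} →
        ∀ z, z ∈ e → (z : V) ∈ w'.support := by
      rintro e ⟨-, hnT⟩ z hz
      rw [hsup]
      by_contra hns
      exact hnT ⟨z, by simp [hTdef, hns], hz⟩
    have hmene : Sym2.map Subtype.val e₁ ≠ Sym2.map Subtype.val e₂ :=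
      fun h => hne (Sym2.map.injective Subtype.val_injective h)
    have htm1 : (t : V) ∈ Sym2.map Subtype.val e₁ := Sym2.mem_map.2 ⟨t, ht1, rfl⟩
    have htm2 : (t : V) ∈ Sym2.map Subtype.val e₂ := Sym2.mem_map.2 ⟨t, ht2, rfl⟩
    show (if Sym2.map Subtype.val e₁ ∈ w'.edges
        then (if (w'.edges).idxOf (Sym2.map Subtype.val e₁) % 2 = 0 then (0 : Fin 3) else 1)
        else 2)
      ≠ (if Sym2.map Subtype.val e₂ ∈ w'.edges
        then (if (w'.edges).idxOf (Sym2.map Subtype.val e₂) % 2 = 0 then (0 : Fin 3) else 1)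
        else 2)
    by_cases m1 : Sym2.map Subtype.val e₁ ∈ w'.edges <;>
      by_cases m2 : Sym2.map Subtype.val e₂ ∈ w'.edges
    · rw [if_pos m1, if_pos m2]
      rcases cycle_parity hcyc' m1 m2 hmene htm1 htm2 with hpar | ⟨hu1, hu2⟩
      · by_cases hp1 : (w'.edges).idxOf (Sym2.map Subtype.val e₁) % 2 = 0
        · have hp2 : ¬ (w'.edges).idxOf (Sym2.map Subtype.val e₂) % 2 = 0 :=
            fun h => hpar (hp1.trans h.symm)
          rw [if_pos hp1, if_neg hp2]
          decide
        · by_cases hp2 : (w'.edges).idxOf (Sym2.map Subtype.val e₂) % 2 = 0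
          · rw [if_neg hp1, if_pos hp2]
            decide
          · exfalso
            apply hpar
            omega
      · exfalso
        rcases cycle_at_most_two hcyc' m1 m2 hestw' hu1 hu2 haest hmene with h | h
        · exact hestH (h ▸ hmapH e₁ h1.1)
        · exact hestH (h ▸ hmapH e₂ h2.1)
    · rw [if_pos m1, if_neg m2]
      by_cases hp1 : (w'.edges).idxOf (Sym2.map Subtype.val e₁) % 2 = 0
      · rw [if_pos hp1]; decide
      · rw [if_neg hp1]; decide
    · rw [if_neg m1, if_pos m2]
      by_cases hp2 : (w'.edges).idxOf (Sym2.map Subtype.val e₂) % 2 = 0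
      · rw [if_pos hp2]; decide
      · rw [if_neg hp2]; decide
    · -- two chords sharing a vertex: contradiction with cubicity
      exfalso
      have htS : (t : V) ∈ w'.support := hsupp e₁ h1 t ht1
      obtain ⟨p, q, hpq, hsp, hsq⟩ := cycle_two_neighbors hcyc' htS
      set y₁ := Sym2.Mem.other' ht1 with hy₁def
      set y₂ := Sym2.Mem.other' ht2 with hy₂def
      have hspec1 : s(t, y₁) = e₁ := Sym2.other_spec' ht1
      have hspec2 : s(t, y₂) = e₂ := Sym2.other_spec' ht2
      have hAdj1 : H.coe.Adj t y₁ := by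
        rw [← SimpleGraph.mem_edgeSet, hspec1]; exact h1.1
      have hAdj2 : H.coe.Adj t y₂ := by
        rw [← SimpleGraph.mem_edgeSet, hspec2]; exact h2.1
      have hG1 : G.Adj (t : V) (y₁ : V) := H.adj_sub (by rwa [Subgraph.coe_adj] at hAdj1)
      have hG2 : G.Adj (t : V) (y₂ : V) := H.adj_sub (by rwa [Subgraph.coe_adj] at hAdj2)
      have hm1eq : Sym2.map Subtype.val e₁ = s((t : V), (y₁ : V)) := by
        rw [← hspec1, Sym2.map_pair_eq]
      have hm2eq : Sym2.map Subtype.val e₂ = s((t : V), (y₂ : V)) := by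
        rw [← hspec2, Sym2.map_pair_eq]
      have hy12 : (y₁ : V) ≠ (y₂ : V) := by
        intro h
        apply hne
        rw [← hspec1, ← hspec2, Subtype.val_injective h]
      have hy1p : (y₁ : V) ≠ p := fun h => m1 (by rw [hm1eq, h]; exact hsp)
      have hy1q : (y₁ : V) ≠ q := fun h => m1 (by rw [hm1eq, h]; exact hsq)
      have hy2p : (y₂ : V) ≠ p := fun h => m2 (by rw [hm2eq, h]; exact hsp)
      have hy2q : (y₂ : V) ≠ q := fun h => m2 (by rw [hm2eq, h]; exact hsq)
      have hGp : G.Adj (t : V) p := w'.adj_of_mem_edges hsp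
      have hGq : G.Adj (t : V) q := w'.adj_of_mem_edges hsq
      have hsub : ({p, q, (y₁ : V), (y₂ : V)} : Set V) ⊆ G.neighborSet (t : V) := by
        rintro z (rfl | rfl | rfl | rfl)
        exacts [hGp, hGq, hG1, hG2]
      have hcard : ({p, q, (y₁ : V), (y₂ : V)} : Set V).ncard = 4 := by
        rw [Set.ncard_insert_of_notMem (by simp [hpq, hy1p.symm, hy2p.symm]) (Set.toFinite _),
          Set.ncard_insert_of_notMem (by simp [hy1q.symm, hy2q.symm]) (Set.toFinite _),
          Set.ncard_pair hy12]
      have hle := Set.ncard_le_ncard hsub (Set.toFinite _)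
      rw [hcard, hcubic] at hle
      omega
  obtain ⟨F, hFsub, hFcard, hFcol⟩ := lemmaA T H.coe hdeg hcolT
  have hresle : resistance H.coe ≤ F.card := Nat.sInf_le ⟨F, hFsub, rfl, hFcol⟩
  -- identify T.card with the number of missed vertices
  have himgeq : H.verts \ {v | v ∈ w.support}
      = Subtype.val '' {x : ↥H.verts | (x : V) ∉ w.support} := by
    ext z
    constructor
    · rintro ⟨hz, hns⟩
      exact ⟨⟨z, hz⟩, hns, rfl⟩
    · rintro ⟨x, hx, rfl⟩
      exact ⟨x.2, hx⟩
  have hTcard : T.card = (H.verts \ {v | v ∈ w.support}).ncard := by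
    rw [himgeq, Set.ncard_image_of_injective _ Subtype.val_injective]
    have : {x : ↥H.verts | (x : V) ∉ w.support} = (↑T : Set ↥H.verts) := by
      ext x
      simp [hTdef]
    rw [this, Set.ncard_coe_finset]
  omega
end

section
/- Let B be the graph obtained from the Petersen graph by deleting two adjacent vertices u and v (keeping no dangling edges, so B has 8 vertices). Then no Hamiltonian path of B can be extended, together with u, v, and suitable edges of the Petersen graph, to a Hamiltonian cycle of the Petersen graph; consequently, any path in B whose endpoints are (in the Petersen graph) neighbours of u and of v respectively cannot cover all 8 vertices of B. -/
open SimpleGraph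

/-- The Petersen graph as the Kneser graph K(5,2): vertices are the 2-element
subsets of a 5-element set, adjacent iff disjoint. -/
def petersen : SimpleGraph {s : Finset (Fin 5) // s.card = 2} where
  Adj a b := Disjoint a.1 b.1
  symm := ⟨fun a b h => h.symm⟩
  loopless := ⟨by
    intro a h
    rw [disjoint_self] at h
    simpa [h] using a.2⟩

section Aux

variable {V : Type*} [DecidableEq V]

/-- Fueled DFS search for a Hamiltonian-type path: `srch G b n r c = true` iff there is a
path from `c` to `b` whose interior+end vertices are exactly `r` (visited in `n` steps). -/
def srch (G : SimpleGraph V) [DecidableRel G.Adj] (b : V) : Nat → Finset V → V → Bool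
  | 0, r, c => decide (r = ∅ ∧ c = b)
  | n+1, r, c => decide (∃ d ∈ r, G.Adj c d ∧ srch G b n (r.erase d) d = true)

lemma srch_sound (G : SimpleGraph V) [DecidableRel G.Adj] {b c : V}
    (p : G.Walk c b) (hp : p.IsPath) :
    srch G b p.support.tail.length p.support.tail.toFinset c = true := by
  induction p with
  | nil => simp [srch]
  | @cons c d b h q ih =>
    have hq : q.IsPath := hp.of_cons
    rw [Walk.support_cons]
    simp only [List.tail_cons]
    have hsup := q.support_eq_cons
    have hdt : d ∉ q.support.tail := by
      have := hq.support_nodup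
      rw [hsup] at this
      exact (List.nodup_cons.1 this).1
    have hlen : q.support.length = q.support.tail.length + 1 := by
      rw [hsup]; simp
    have herase : q.support.toFinset.erase d = q.support.tail.toFinset := by
      conv_lhs => rw [hsup]
      rw [List.toFinset_cons, Finset.erase_insert_eq_erase,
        Finset.erase_eq_of_notMem (by simpa using hdt)]
    rw [hlen, srch, decide_eq_true_iff]
    exact ⟨d, List.mem_toFinset.2 q.start_mem_support, h, by rw [herase]; exact ih hq⟩

end Aux

instance : DecidableRel petersen.Adj := fun a b => by
  unfold petersen; dsimp; infer_instance

set_option maxRecDepth 100000 in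
set_option maxHeartbeats 4000000 in
lemma petersen_key : ∀ u v a b : {s : Finset (Fin 5) // s.card = 2},
    petersen.Adj u v → petersen.Adj u a → petersen.Adj v b → a ≠ v → b ≠ u →
    srch petersen b (((Finset.univ.erase u).erase v).erase a).card
      (((Finset.univ.erase u).erase v).erase a) a = false := by decide

/-- Let B be the Petersen graph minus two adjacent vertices u, v.  Any path in B whose
endpoints are neighbours (in the Petersen graph) of u and of v respectively misses some
vertex of B. -/
theorem stmt_5 (u v : {s : Finset (Fin 5) // s.card = 2}) (huv : petersen.Adj u v)
    (B : SimpleGraph {w : {s : Finset (Fin 5) // s.card = 2} // w ≠ u ∧ w ≠ v})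
    (hB : B = petersen.induce {w | w ≠ u ∧ w ≠ v})
    (a b : {w : {s : Finset (Fin 5) // s.card = 2} // w ≠ u ∧ w ≠ v})
    (ha : petersen.Adj u a.1) (hb : petersen.Adj v b.1)
    (p : B.Walk a b) (hp : p.IsPath) :
    ∃ w, w ∉ p.support := by
  subst hB
  by_contra hcon
  push_neg at hcon
  let f : petersen.induce {w | w ≠ u ∧ w ≠ v} →g petersen :=
    SimpleGraph.Hom.comap Subtype.val petersen
  have hfi : Function.Injective f := Subtype.val_injective
  let q := p.map f
  have hq : q.IsPath := Walk.map_isPath_of_injective hfi hp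
  have hs : q.support = p.support.map Subtype.val := by
    show (p.map f).support = _; rw [Walk.support_map]; rfl
  have hmem : ∀ w, w ∈ q.support ↔ (w ≠ u ∧ w ≠ v) := by
    intro w
    rw [hs, List.mem_map]
    constructor
    · rintro ⟨x, _, rfl⟩; exact x.2
    · rintro hw; exact ⟨⟨w, hw⟩, hcon _, rfl⟩
  have hsup := q.support_eq_cons
  have hnd := hq.support_nodup
  have hat : (a : {s : Finset (Fin 5) // s.card = 2}) ∉ q.support.tail := by
    rw [hsup] at hnd
    exact (List.nodup_cons.1 hnd).1
  have hE : q.support.tail.toFinset =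
      ((Finset.univ.erase u).erase v).erase a.1 := by
    ext w
    simp only [List.mem_toFinset, Finset.mem_erase, Finset.mem_univ, and_true]
    constructor
    · intro hw
      have hws : w ∈ q.support := by rw [hsup]; exact List.mem_cons_of_mem _ hw
      have := (hmem w).1 hws
      refine ⟨?_, this.2, this.1⟩
      rintro rfl; exact hat hw
    · rintro ⟨hwa, hwv, hwu⟩
      have hws : w ∈ q.support := (hmem w).2 ⟨hwu, hwv⟩
      rw [hsup, List.mem_cons] at hws
      rcases hws with rfl | hws
      · exact absurd rfl hwa
      · exact hws
  have hlen : q.support.tail.length =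
      (((Finset.univ.erase u).erase v).erase a.1).card := by
    rw [← hE, List.toFinset_card_of_nodup]
    rw [hsup] at hnd
    exact (List.nodup_cons.1 hnd).2
  have hT := srch_sound petersen q hq
  rw [hE, hlen] at hT
  have hT' : srch petersen b.1 (((Finset.univ.erase u).erase v).erase a.1).card
      (((Finset.univ.erase u).erase v).erase a.1) a.1 = true := hT
  rw [petersen_key u v a.1 b.1 huv ha hb a.2.2 b.2.1] at hT'
  exact Bool.false_ne_true hT'
end

section
/- Let H be the graph formed from two copies of a non-3-edge-colourable 4-pole H1 (with dangling edges e1, e2, f1, f2 where e1 and f1 must receive the same colour in any 3-edge-colouring of H1) by identifying the f1-edges of the two copies and attaching both e1-edges to a new vertex v. Then H is not properly 3-edge-colourable; i.e., H has resistance at least 1. -/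
open SimpleGraph

/-- The graph H formed from two copies of a 4-pole `G₁` (copies indexed by `Bool`) by
joining the attachment vertices of the dangling edge f₁ of the two copies by an edge
(identifying the f₁-edges) and attaching the e₁-edges of both copies to a new vertex. -/
def twoCopies {V₁ : Type*} (G₁ : SimpleGraph V₁) (ae₁ af₁ : V₁) :
    SimpleGraph (V₁ × Bool ⊕ Unit) where
  Adj p q := match p, q with
    | .inl (x, i), .inl (y, j) => (i = j ∧ G₁.Adj x y) ∨ (i ≠ j ∧ x = af₁ ∧ y = af₁)
    | .inl (x, _), .inr _ => x = ae₁
    | .inr _, .inl (y, _) => y = ae₁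
    | .inr _, .inr _ => False
  symm := by
    constructor
    rintro (⟨x, i⟩ | u) (⟨y, j⟩ | u') h
    · rcases h with ⟨hij, h⟩ | ⟨hij, h₁, h₂⟩
      · exact Or.inl ⟨hij.symm, h.symm⟩
      · exact Or.inr ⟨hij.symm, h₂, h₁⟩
    · exact h
    · exact h
    · exact h
  loopless := by
    constructor
    rintro (⟨x, i⟩ | u) h
    · rcases h with ⟨_, h⟩ | ⟨hij, _, _⟩
      · exact G₁.loopless.irrefl x h
      · exact hij rfl
    · exact h
lemma fin3_exists_notMem (s : Finset (Fin 3)) (h : s.card ≤ 2) : ∃ x, x ∉ s := by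
  by_contra hx
  push_neg at hx
  have hsub : (Finset.univ : Finset (Fin 3)) ⊆ s := fun x _ => hx x
  have := Finset.card_le_card hsub
  simp at this
  omega

lemma edge_eq_of_mem {V : Type*} (G : SimpleGraph V) (e : Sym2 V) (he : e ∈ G.edgeSet)
    (w : V) (hw : w ∈ e) : ∃ u, G.Adj w u ∧ e = s(w, u) := by
  induction e using Sym2.ind with
  | _ x y =>
    rw [SimpleGraph.mem_edgeSet] at he
    rcases Sym2.mem_iff.1 hw with rfl | rfl
    · exact ⟨y, he, rfl⟩
    · exact ⟨x, he.symm, Sym2.eq_swap⟩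

/-- if in every proper 3-edge-colouring of the 4-pole `G₁` (with dangling
edges e₁, e₂, f₁, f₂ attached at ae₁, ae₂, af₁, af₂) the dangling edges e₁ and f₁
receive the same colour, then the graph `H` obtained from two copies of the pole by
identifying the f₁-edges and attaching both e₁-edges to a new vertex is not properly
3-edge-colourable, i.e. has resistance at least 1. -/
theorem stmt_13 {V₁ : Type*} [Fintype V₁] [DecidableEq V₁] (G₁ : SimpleGraph V₁)
    (ae₁ ae₂ af₁ af₂ : V₁)
    (hpole : ∀ w, (G₁.neighborSet w).ncard
      + (Finset.univ.filter fun i : Fin 4 => ![ae₁, ae₂, af₁, af₂] i = w).card = 3)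
    (hsame : ∀ (c : Sym2 V₁ → Fin 3) (c₁ c₂ c₃ c₄ : Fin 3),
      IsProper3EdgeColoring G₁ c →
      (∀ e ∈ G₁.edgeSet, ∀ i : Fin 4,
        ![ae₁, ae₂, af₁, af₂] i ∈ e → c e ≠ ![c₁, c₂, c₃, c₄] i) →
      (∀ i j : Fin 4, i ≠ j → ![ae₁, ae₂, af₁, af₂] i = ![ae₁, ae₂, af₁, af₂] j →
        ![c₁, c₂, c₃, c₄] i ≠ ![c₁, c₂, c₃, c₄] j) →
      c₁ = c₃) :
    ¬ Is3EdgeColorable (twoCopies G₁ ae₁ af₁) := by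
  classical
  rintro ⟨c, hc⟩
  set H := twoCopies G₁ ae₁ af₁ with hH
  let ι : Bool → V₁ → V₁ × Bool ⊕ Unit := fun i x => Sum.inl (x, i)
  have ιinj : ∀ i, Function.Injective (ι i) := by
    intro i x y h
    simpa [ι] using h
  let cc : Bool → Sym2 V₁ → Fin 3 := fun i e => c (e.map (ι i))
  let eE : Bool → Sym2 (V₁ × Bool ⊕ Unit) := fun i => s(Sum.inl (ae₁, i), Sum.inr ())
  let fE : Sym2 (V₁ × Bool ⊕ Unit) := s(Sum.inl (af₁, true), Sum.inl (af₁, false))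
  have heE : ∀ i, eE i ∈ H.edgeSet := by
    intro i
    rw [SimpleGraph.mem_edgeSet]
    show (ae₁ = ae₁)
    rfl
  have hfE : fE ∈ H.edgeSet := by
    rw [SimpleGraph.mem_edgeSet]
    show (true = false ∧ _) ∨ (true ≠ false ∧ af₁ = af₁ ∧ af₁ = af₁)
    exact Or.inr ⟨by simp, rfl, rfl⟩
  have hmapE : ∀ (i : Bool), ∀ e ∈ G₁.edgeSet, e.map (ι i) ∈ H.edgeSet := by
    intro i e he
    induction e using Sym2.ind with
    | _ x y =>
      rw [SimpleGraph.mem_edgeSet] at he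
      rw [Sym2.map_pair_eq, SimpleGraph.mem_edgeSet]
      exact Or.inl ⟨rfl, he⟩
  have hmem_map : ∀ (i : Bool) (e : Sym2 V₁) (z), z ∈ e.map (ι i) →
      ∃ x ∈ e, z = Sum.inl (x, i) := by
    intro i e z hz
    rcases Sym2.mem_map.mp hz with ⟨x, hx, hfx⟩
    exact ⟨x, hx, hfx.symm⟩
  have hccproper : ∀ i, IsProper3EdgeColoring G₁ (cc i) := by
    rintro i e₁ he₁ e₂ he₂ hne ⟨w, hw1, hw2⟩
    refine hc _ (hmapE i e₁ he₁) _ (hmapE i e₂ he₂) ?_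
      ⟨ι i w, Sym2.mem_map.mpr ⟨w, hw1, rfl⟩, Sym2.mem_map.mpr ⟨w, hw2, rfl⟩⟩
    intro h
    exact hne (Sym2.map.injective (ιinj i) h)
  -- colours of incident edges to a vertex
  let Nc : Bool → V₁ → Finset (Fin 3) := fun i w =>
    ((G₁.neighborSet w).toFinite.toFinset).image fun u => cc i s(w, u)
  have hNc_card : ∀ i w, (Nc i w).card ≤ (G₁.neighborSet w).ncard := by
    intro i w
    refine Finset.card_image_le.trans ?_
    rw [Set.ncard_eq_toFinset_card (G₁.neighborSet w) (G₁.neighborSet w).toFinite]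
  have hNc_mem : ∀ (i : Bool) (w : V₁), ∀ e ∈ G₁.edgeSet, w ∈ e → cc i e ∈ Nc i w := by
    intro i w e he hw
    obtain ⟨u, hu, rfl⟩ := edge_eq_of_mem G₁ e he w hw
    exact Finset.mem_image.mpr ⟨u, by simp [SimpleGraph.mem_neighborSet, hu], rfl⟩
  -- basic colour inequalities
  have hA : ∀ (i : Bool), ∀ e ∈ G₁.edgeSet, ae₁ ∈ e → cc i e ≠ c (eE i) := by
    intro i e he hmem
    refine hc _ (hmapE i e he) _ (heE i) ?_
      ⟨Sum.inl (ae₁, i), Sym2.mem_map.mpr ⟨ae₁, hmem, rfl⟩, by simp [eE]⟩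
    intro h
    have hzz : (Sum.inr () : V₁ × Bool ⊕ Unit) ∈ e.map (ι i) := by rw [h]; simp [eE]
    rcases hmem_map i e _ hzz with ⟨x, _, hx⟩
    simp at hx
  have hFc : ∀ (i : Bool), ∀ e ∈ G₁.edgeSet, af₁ ∈ e → cc i e ≠ c fE := by
    intro i e he hmem
    refine hc _ (hmapE i e he) _ hfE ?_
      ⟨Sum.inl (af₁, i), Sym2.mem_map.mpr ⟨af₁, hmem, rfl⟩, by cases i <;> simp [fE]⟩
    intro h
    have hzz : (Sum.inl (af₁, !i) : V₁ × Bool ⊕ Unit) ∈ e.map (ι i) := by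
      rw [h]; cases i <;> simp [fE]
    rcases hmem_map i e _ hzz with ⟨x, _, hx⟩
    rw [Sum.inl.injEq, Prod.mk.injEq] at hx
    cases i <;> simp at hx
  have hEF : ∀ (i : Bool), ae₁ = af₁ → c (eE i) ≠ c fE := by
    intro i hEq
    refine hc _ (heE i) _ hfE ?_
      ⟨Sum.inl (ae₁, i), by simp [eE], by subst hEq; cases i <;> simp [fE]⟩
    intro h
    have hzz : (Sum.inr () : V₁ × Bool ⊕ Unit) ∈ fE := by rw [← h]; simp [eE]
    simp [fE] at hzz
  have hEE : c (eE true) ≠ c (eE false) := by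
    refine hc _ (heE true) _ (heE false) ?_ ⟨Sum.inr (), by simp [eE], by simp [eE]⟩
    intro h
    have hzz : (Sum.inl (ae₁, true) : V₁ × Bool ⊕ Unit) ∈ eE false := by
      rw [← h]; simp [eE]
    simp [eE] at hzz
  -- filter cardinality
  have hfilt : ∀ w, (Finset.univ.filter fun j : Fin 4 => ![ae₁, ae₂, af₁, af₂] j = w).card
      = (if ae₁ = w then 1 else 0) + (if ae₂ = w then 1 else 0)
        + (if af₁ = w then 1 else 0) + (if af₂ = w then 1 else 0) := by
    intro w
    rw [Finset.card_filter, Fin.sum_univ_four]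
    simp only [Matrix.cons_val_zero, Matrix.cons_val_one, Matrix.head_cons,
      Matrix.cons_val_two, Matrix.tail_cons, Matrix.cons_val_three, Matrix.head_fin_const]
    congr
  have main : ∀ i : Bool, c (eE i) = c fE := by
    intro i
    obtain ⟨c₂, hc₂⟩ := fin3_exists_notMem
      (Nc i ae₂ ∪ (if ae₁ = ae₂ then {c (eE i)} else ∅) ∪ (if af₁ = ae₂ then {c fE} else ∅))
      (by
        have h1 := hpole ae₂
        rw [hfilt ae₂, if_pos rfl] at h1
        have h2 := hNc_card i ae₂
        have h3 : (Nc i ae₂ ∪ (if ae₁ = ae₂ then {c (eE i)} else ∅)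
            ∪ (if af₁ = ae₂ then {c fE} else ∅)).card
            ≤ (Nc i ae₂).card + (if ae₁ = ae₂ then 1 else 0) + (if af₁ = ae₂ then 1 else 0) := by
          refine Finset.card_union_le _ _ |>.trans ?_
          gcongr
          · refine Finset.card_union_le _ _ |>.trans ?_
            gcongr
            split_ifs <;> simp
          · split_ifs <;> simp
        omega)
    obtain ⟨c₄, hc₄⟩ := fin3_exists_notMem
      (Nc i af₂ ∪ (if ae₁ = af₂ then {c (eE i)} else ∅) ∪ (if af₁ = af₂ then {c fE} else ∅)
        ∪ (if ae₂ = af₂ then {c₂} else ∅))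
      (by
        have h1 := hpole af₂
        rw [hfilt af₂, if_pos rfl] at h1
        have h2 := hNc_card i af₂
        have h3 : (Nc i af₂ ∪ (if ae₁ = af₂ then {c (eE i)} else ∅)
            ∪ (if af₁ = af₂ then {c fE} else ∅) ∪ (if ae₂ = af₂ then {c₂} else ∅)).card
            ≤ (Nc i af₂).card + (if ae₁ = af₂ then 1 else 0) + (if af₁ = af₂ then 1 else 0)
              + (if ae₂ = af₂ then 1 else 0) := by
          refine Finset.card_union_le _ _ |>.trans ?_
          gcongr
          · refine Finset.card_union_le _ _ |>.trans ?_
            gcongr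
            · refine Finset.card_union_le _ _ |>.trans ?_
              gcongr
              split_ifs <;> simp
            · split_ifs <;> simp
          · split_ifs <;> simp
        omega)
    simp only [Finset.mem_union, not_or] at hc₂ hc₄
    obtain ⟨⟨h2n, h2e⟩, h2f⟩ := hc₂
    obtain ⟨⟨⟨h4n, h4e⟩, h4f⟩, h4two⟩ := hc₄
    have h2e' : ae₁ = ae₂ → c (eE i) ≠ c₂ := by
      intro h heq; rw [if_pos h] at h2e; simp [← heq] at h2e
    have h2f' : af₁ = ae₂ → c fE ≠ c₂ := by
      intro h heq; rw [if_pos h] at h2f; simp [← heq] at h2f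
    have h4e' : ae₁ = af₂ → c (eE i) ≠ c₄ := by
      intro h heq; rw [if_pos h] at h4e; simp [← heq] at h4e
    have h4f' : af₁ = af₂ → c fE ≠ c₄ := by
      intro h heq; rw [if_pos h] at h4f; simp [← heq] at h4f
    have h4two' : ae₂ = af₂ → c₂ ≠ c₄ := by
      intro h heq; rw [if_pos h] at h4two; simp [← heq] at h4two
    refine hsame (cc i) (c (eE i)) c₂ (c fE) c₄ (hccproper i) ?_ ?_
    · intro e he j
      fin_cases j <;>
        simp only [Fin.reduceFinMk, Matrix.cons_val_zero, Matrix.cons_val_one, Matrix.head_cons,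
          Matrix.cons_val_two, Matrix.tail_cons, Matrix.cons_val_three, Matrix.head_fin_const,
          Fin.mk_zero, Fin.mk_one, Fin.isValue]
      · exact hA i e he
      · intro hmem heq
        exact h2n (heq ▸ hNc_mem i ae₂ e he hmem)
      · exact hFc i e he
      · intro hmem heq
        exact h4n (heq ▸ hNc_mem i af₂ e he hmem)
    · intro j k hjk
      fin_cases j <;> fin_cases k <;>
        simp only [Fin.reduceFinMk, Matrix.cons_val_zero, Matrix.cons_val_one, Matrix.head_cons,
          Matrix.cons_val_two, Matrix.tail_cons, Matrix.cons_val_three, Matrix.head_fin_const,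
          Fin.mk_zero, Fin.mk_one, Fin.isValue] <;>
        first
          | (exfalso; exact hjk rfl)
          | skip
      · exact h2e'
      · exact hEF i
      · exact h4e'
      · intro h; exact (h2e' h.symm).symm
      · intro h; exact (h2f' h.symm).symm
      · exact h4two'
      · intro h; exact (hEF i h.symm).symm
      · exact h2f'
      · exact h4f'
      · intro h; exact (h4e' h.symm).symm
      · intro h; exact (h4two' h.symm).symm
      · intro h; exact (h4f' h.symm).symm
  exact hEE ((main true).trans (main false).symm)
end
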